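/- In O_q(M_n(k)), the quantum Laplace relations hold: for all i, l, ∑_{j=1}^n (−q)^{j−l} X_{ij} [l̃ | j̃] = δ_{il} D_q, where [l̃|j̃] denotes the quantum minor with row set {1,…,n}∖{l} and column set {1,…,n}∖{j}, and D_q is the quantum determinant. -/

import Mathlib

namespace QMn

variable (k : Type) [Field k] (q : kˣ) (n : ℕ)

/-- The standard quantum matrix relations on generators `X (i,j)`. -/
inductive Rel : FreeAlgebra k (Fin n × Fin n) → FreeAlgebra k (Fin n × Fin n) → Prop
  | row {i j m : Fin n} (h : j < m) :
      Rel (FreeAlgebra.ι k (i, j) * FreeAlgebra.ι k (i, m))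
        ((q : k) • (FreeAlgebra.ι k (i, m) * FreeAlgebra.ι k (i, j)))
  | col {i l j : Fin n} (h : i < l) :
      Rel (FreeAlgebra.ι k (i, j) * FreeAlgebra.ι k (l, j))
        ((q : k) • (FreeAlgebra.ι k (l, j) * FreeAlgebra.ι k (i, j)))
  | anti {i l j m : Fin n} (h1 : i < l) (h2 : m < j) :
      Rel (FreeAlgebra.ι k (i, j) * FreeAlgebra.ι k (l, m))
        (FreeAlgebra.ι k (l, m) * FreeAlgebra.ι k (i, j))
  | diag {i l j m : Fin n} (h1 : i < l) (h2 : j < m) :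
      Rel (FreeAlgebra.ι k (i, j) * FreeAlgebra.ι k (l, m))
        (FreeAlgebra.ι k (l, m) * FreeAlgebra.ι k (i, j) +
          ((q : k) - ((q⁻¹ : kˣ) : k)) •
            (FreeAlgebra.ι k (i, m) * FreeAlgebra.ι k (l, j)))

/-- The quantum matrix algebra `O_q(M_n(k))`. -/
abbrev OqM := RingQuot (Rel k q n)

/-- The canonical generators `X_{ij}` of `O_q(M_n(k))`. -/
noncomputable def X (i j : Fin n) : OqM k q n :=
  RingQuot.mkAlgHom k (Rel k q n) (FreeAlgebra.ι k (i, j))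

/-- The length (number of inversions) of a permutation. -/
def permLen {n : ℕ} (π : Equiv.Perm (Fin n)) : ℕ :=
  ((Finset.univ : Finset (Fin n × Fin n)).filter
    fun p => p.1 < p.2 ∧ π p.2 < π p.1).card

/-- The quantum determinant of `O_q(M_n(k))`. -/
noncomputable def Dq : OqM k q n :=
  ∑ π : Equiv.Perm (Fin n),
    ((-(q : k)) ^ permLen π) • (List.ofFn fun i => X k q n i (π i)).prod

end QMn

/-- The quantum minor `[ĩ|j̃]` of `O_q(M_{n+1}(k))`, with row set the complement
of `{i}` and column set the complement of `{j}`. -/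
noncomputable def cminor (k : Type) [Field k] (q : kˣ) (n : ℕ) (i j : Fin (n + 1)) :
    QMn.OqM k q (n + 1) :=
  ∑ π : Equiv.Perm (Fin n),
    ((-(q : k)) ^ QMn.permLen π) •
      (List.ofFn fun t =>
        QMn.X k q (n + 1) (i.succAbove t) (j.succAbove (π t))).prod

namespace QLap
open QMn Finset

variable {k : Type} [Field k] {q : kˣ} {N : ℕ}

/-! ### Relations in the quantum matrix algebra -/

lemma Xrow {i a b : Fin N} (h : a < b) :
    X k q N i a * X k q N i b = (q : k) • (X k q N i b * X k q N i a) := by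
  have := RingQuot.mkAlgHom_rel k (QMn.Rel.row (k := k) (q := q) (n := N) (i := i) h)
  simpa [X, map_mul, map_smul] using this

lemma Xanti {i j a b : Fin N} (hij : i < j) (hab : a < b) :
    X k q N i b * X k q N j a = X k q N j a * X k q N i b := by
  have := RingQuot.mkAlgHom_rel k (QMn.Rel.anti (k := k) (q := q) (n := N) hij hab)
  simpa [X, map_mul] using this

lemma Xdiag {i j a b : Fin N} (hij : i < j) (hab : a < b) :
    X k q N i a * X k q N j b =
      X k q N j b * X k q N i a +
        ((q : k) - ((q⁻¹ : kˣ) : k)) • (X k q N i b * X k q N j a) := by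
  have := RingQuot.mkAlgHom_rel k (QMn.Rel.diag (k := k) (q := q) (n := N) hij hab)
  simpa [X, map_mul, map_add, map_smul] using this

lemma core_lt {i j a b : Fin N} (hij : i < j) (hab : a < b) :
    X k q N i a * X k q N j b + (-(q : k)) • (X k q N i b * X k q N j a)
      = (-((q⁻¹ : kˣ) : k)) • (X k q N j a * X k q N i b) + X k q N j b * X k q N i a := by
  rw [Xdiag hij hab, Xanti hij hab]
  module

lemma core_eq {i a b : Fin N} (hab : a < b) :
    X k q N i a * X k q N i b + (-(q : k)) • (X k q N i b * X k q N i a) = 0 := by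
  rw [Xrow hab]
  module

/-! ### The auxiliary module and the operators `z_i` -/

abbrev Mod (k : Type) [Field k] (q : kˣ) (N : ℕ) := Finset (Fin N) → QMn.OqM k q N

/-- The "empty" vector. -/
noncomputable def emp : Mod k q N := fun T => if T = ∅ then 1 else 0

noncomputable def zop (i : Fin N) (m : Mod k q N) : Mod k q N :=
  fun T => ∑ a ∈ T,
    ((-(q : k)) ^ (T.filter (· < a)).card) • (X k q N i a * m (T.erase a))

lemma zop_smul (i : Fin N) (c : k) (m : Mod k q N) :
    zop i (c • m) = c • zop i m := by
  funext T
  simp only [zop, Pi.smul_apply, Finset.smul_sum]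
  refine Finset.sum_congr rfl fun a _ => ?_
  rw [mul_smul_comm, smul_comm]

lemma zop_zero (i : Fin N) : zop (q := q) i 0 = 0 := by
  funext T
  simp [zop]

lemma pair_decomp {α β : Type*} [LinearOrder α] [DecidableEq α] [AddCommMonoid β]
    (T : Finset α) (f : α → α → β) :
    ∑ a ∈ T, ∑ b ∈ T.erase a, f a b
      = ∑ a ∈ T, ∑ b ∈ T.filter (a < ·), (f a b + f b a) := by
  classical
  have key : ∀ a ∈ T, ∑ b ∈ T.erase a, f a b
      = (∑ b ∈ T, if b < a then f a b else 0) + ∑ b ∈ T, if a < b then f a b else 0 := by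
    intro a _
    rw [← Finset.filter_ne' T a, Finset.sum_filter, ← Finset.sum_add_distrib]
    refine Finset.sum_congr rfl fun b _ => ?_
    rcases lt_trichotomy b a with h | h | h
    · simp [h, h.ne, h.not_gt]
    · simp [h]
    · simp [h, h.ne', h.not_gt]
  calc ∑ a ∈ T, ∑ b ∈ T.erase a, f a b
      = ∑ a ∈ T, ((∑ b ∈ T, if b < a then f a b else 0)
          + ∑ b ∈ T, if a < b then f a b else 0) := Finset.sum_congr rfl key
    _ = (∑ a ∈ T, ∑ b ∈ T, if b < a then f a b else 0)
          + ∑ a ∈ T, ∑ b ∈ T, if a < b then f a b else 0 := Finset.sum_add_distrib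
    _ = (∑ a ∈ T, ∑ b ∈ T, if a < b then f b a else 0)
          + ∑ a ∈ T, ∑ b ∈ T, if a < b then f a b else 0 := by rw [Finset.sum_comm]
    _ = ∑ a ∈ T, ∑ b ∈ T.filter (a < ·), (f a b + f b a) := by
        rw [← Finset.sum_add_distrib]
        refine Finset.sum_congr rfl fun a _ => ?_
        rw [Finset.sum_filter, ← Finset.sum_add_distrib]
        refine Finset.sum_congr rfl fun b _ => ?_
        split <;> simp [add_comm]

lemma zop_zop (i j : Fin N) (m : Mod k q N) (T : Finset (Fin N)) :
    zop i (zop j m) T = ∑ a ∈ T, ∑ b ∈ T.erase a,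
      ((-(q : k)) ^ ((T.filter (· < a)).card + ((T.erase a).filter (· < b)).card)) •
        (X k q N i a * (X k q N j b * m ((T.erase a).erase b))) := by
  simp only [zop, Finset.mul_sum, Finset.smul_sum]
  refine Finset.sum_congr rfl fun a _ => Finset.sum_congr rfl fun b _ => ?_
  rw [mul_smul_comm, smul_smul, ← pow_add]

lemma zop_swap {i j : Fin N} (hij : i < j) (m : Mod k q N) :
    zop i (zop j m) = (-((q⁻¹ : kˣ) : k)) • zop j (zop i m) := by
  funext T
  have hq : (-(q : k)) * (-((q⁻¹ : kˣ) : k)) = 1 := by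
    rw [neg_mul_neg, Units.mul_inv]
  rw [Pi.smul_apply, zop_zop, zop_zop, pair_decomp, pair_decomp, Finset.smul_sum]
  refine Finset.sum_congr rfl fun a ha => ?_
  rw [Finset.smul_sum]
  refine Finset.sum_congr rfl fun b hb => ?_
  obtain ⟨hbT, hab⟩ := Finset.mem_filter.mp hb
  have h1 : ((T.erase b).filter (· < a)).card = (T.filter (· < a)).card := by
    rw [Finset.filter_erase, Finset.erase_eq_of_notMem]
    simp only [Finset.mem_filter]
    exact fun h => absurd h.2 hab.not_gt
  have h2 : (T.filter (· < b)).card = ((T.erase a).filter (· < b)).card + 1 := by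
    rw [Finset.filter_erase, Finset.card_erase_add_one]
    exact Finset.mem_filter.mpr ⟨ha, hab⟩
  have h3 : (T.erase b).erase a = (T.erase a).erase b := Finset.erase_right_comm
  set s := (T.filter (· < a)).card + ((T.erase a).filter (· < b)).card with hs
  have e2 : (T.filter (· < b)).card + ((T.erase b).filter (· < a)).card = s + 1 := by
    rw [h1, h2]; omega
  rw [h3, e2]
  set m₂ := m ((T.erase a).erase b)
  have key : X k q N i a * (X k q N j b * m₂) + (-(q : k)) • (X k q N i b * (X k q N j a * m₂))
      = (-((q⁻¹ : kˣ) : k)) • (X k q N j a * (X k q N i b * m₂))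
        + X k q N j b * (X k q N i a * m₂) := by
    have := congrArg (· * m₂) (core_lt (q := q) hij hab)
    simpa [add_mul, smul_mul_assoc, mul_assoc] using this
  have hscal : (-((q⁻¹ : kˣ) : k)) * (-(q : k)) ^ (s + 1) = (-(q : k)) ^ s := by
    rw [pow_succ]
    calc (-((q⁻¹ : kˣ) : k)) * ((-(q : k)) ^ s * (-(q : k)))
        = (-(q : k)) ^ s * ((-(q : k)) * (-((q⁻¹ : kˣ) : k))) := by ring
      _ = (-(q : k)) ^ s := by rw [hq, mul_one]
  calc (-(q : k)) ^ s • (X k q N i a * (X k q N j b * m₂))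
        + (-(q : k)) ^ (s + 1) • (X k q N i b * (X k q N j a * m₂))
      = (-(q : k)) ^ s • (X k q N i a * (X k q N j b * m₂)
          + (-(q : k)) • (X k q N i b * (X k q N j a * m₂))) := by module
    _ = (-(q : k)) ^ s • ((-((q⁻¹ : kˣ) : k)) • (X k q N j a * (X k q N i b * m₂))
          + X k q N j b * (X k q N i a * m₂)) := by rw [key]
    _ = (-((q⁻¹ : kˣ) : k)) • ((-(q : k)) ^ s • (X k q N j a * (X k q N i b * m₂))
          + (-(q : k)) ^ (s + 1) • (X k q N j b * (X k q N i a * m₂))) := by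
        simp only [smul_add, smul_smul]
        rw [hscal, mul_comm]

lemma zop_swap' {i j : Fin N} (hij : i < j) (m : Mod k q N) :
    zop j (zop i m) = (-(q : k)) • zop i (zop j m) := by
  have hq : (-(q : k)) * (-((q⁻¹ : kˣ) : k)) = 1 := by
    rw [neg_mul_neg, Units.mul_inv]
  rw [zop_swap hij m, smul_smul, hq, one_smul]

lemma zop_sq (i : Fin N) (m : Mod k q N) : zop i (zop i m) = 0 := by
  funext T
  rw [zop_zop, pair_decomp]
  refine Finset.sum_eq_zero fun a ha => Finset.sum_eq_zero fun b hb => ?_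
  obtain ⟨hbT, hab⟩ := Finset.mem_filter.mp hb
  have h1 : ((T.erase b).filter (· < a)).card = (T.filter (· < a)).card := by
    rw [Finset.filter_erase, Finset.erase_eq_of_notMem]
    simp only [Finset.mem_filter]
    exact fun h => absurd h.2 hab.not_gt
  have h2 : (T.filter (· < b)).card = ((T.erase a).filter (· < b)).card + 1 := by
    rw [Finset.filter_erase, Finset.card_erase_add_one]
    exact Finset.mem_filter.mpr ⟨ha, hab⟩
  have h3 : (T.erase b).erase a = (T.erase a).erase b := Finset.erase_right_comm
  set s := (T.filter (· < a)).card + ((T.erase a).filter (· < b)).card with hs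
  have e2 : (T.filter (· < b)).card + ((T.erase b).filter (· < a)).card = s + 1 := by
    rw [h1, h2]; omega
  rw [h3, e2]
  set m₂ := m ((T.erase a).erase b)
  have key : X k q N i a * (X k q N i b * m₂) + (-(q : k)) • (X k q N i b * (X k q N i a * m₂))
      = 0 := by
    have := congrArg (· * m₂) (core_eq (q := q) (i := i) hab)
    simpa [add_mul, smul_mul_assoc, mul_assoc] using this
  calc (-(q : k)) ^ s • (X k q N i a * (X k q N i b * m₂))
        + (-(q : k)) ^ (s + 1) • (X k q N i b * (X k q N i a * m₂))
      = (-(q : k)) ^ s • (X k q N i a * (X k q N i b * m₂)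
          + (-(q : k)) • (X k q N i b * (X k q N i a * m₂))) := by module
    _ = 0 := by rw [key, smul_zero]

/-! ### Iterated application -/

noncomputable def appL : List (Fin N) → Mod k q N → Mod k q N
  | [], m => m
  | t :: ts, m => zop t (appL ts m)

lemma appL_append (xs ys : List (Fin N)) (m : Mod k q N) :
    appL (xs ++ ys) m = appL xs (appL ys m) := by
  induction xs with
  | nil => rfl
  | cons t ts ih => simp [appL, ih]

lemma appL_smul (ts : List (Fin N)) (c : k) (m : Mod k q N) :
    appL ts (c • m) = c • appL ts m := by
  induction ts with
  | nil => rfl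
  | cons t ts ih => simp only [appL, ih, zop_smul]

lemma appL_zero (ts : List (Fin N)) : appL (q := q) ts 0 = 0 := by
  induction ts with
  | nil => rfl
  | cons t ts ih => simp only [appL, ih, zop_zero]

lemma appL_move (ts : List (Fin N)) (b : Fin N) (h : ∀ t ∈ ts, t < b) (m : Mod k q N) :
    appL (b :: ts) m = ((-(q : k)) ^ ts.length) • appL (ts ++ [b]) m := by
  induction ts generalizing m with
  | nil => simp [appL]
  | cons t ts ih =>
    have ht : t < b := h t List.mem_cons_self
    calc appL (b :: t :: ts) m = zop b (zop t (appL ts m)) := rfl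
      _ = (-(q : k)) • zop t (zop b (appL ts m)) := zop_swap' ht _
      _ = (-(q : k)) • zop t (appL (b :: ts) m) := rfl
      _ = (-(q : k)) • zop t (((-(q : k)) ^ ts.length) • appL (ts ++ [b]) m) := by
          rw [ih (fun x hx => h x (List.mem_cons_of_mem t hx)) m]
      _ = ((-(q : k)) ^ (t :: ts).length) • appL ((t :: ts) ++ [b]) m := by
          rw [zop_smul, smul_smul, List.length_cons, ← pow_succ']
          rfl

lemma appL_dup (A B : List (Fin N)) (i : Fin N) (h : ∀ t ∈ A, t < i) (m : Mod k q N) :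
    appL (i :: (A ++ i :: B)) m = 0 := by
  rw [show i :: (A ++ i :: B) = (i :: A) ++ (i :: B) from by simp,
    appL_append, appL_move A i h, appL_append]
  have h0 : appL [i] (appL (i :: B) m) = (0 : Mod k q N) := zop_sq i (appL B m)
  rw [h0, appL_zero, smul_zero]

/-! ### Counting -/

lemma card_filter_lt {s : ℕ} (m₀ : Fin s) :
    ((univ : Finset (Fin s)).filter (· < m₀)).card = m₀.val := by
  have : (univ : Finset (Fin s)).filter (· < m₀) = Finset.Iio m₀ := by
    ext x; simp
  rw [this, Fin.card_Iio]

lemma card_filter_castSucc_lt {s : ℕ} (m₀ : Fin (s + 1)) :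
    ((univ : Finset (Fin s)).filter (fun x => Fin.castSucc x < m₀)).card = m₀.val := by
  have : ((univ : Finset (Fin s)).filter (fun x => Fin.castSucc x < m₀)).card
      = (Finset.Iio m₀).card := by
    refine Finset.card_bij' (fun x _ => Fin.castSucc x)
      (fun y hy => ⟨y.val, ?_⟩) ?_ ?_ ?_ ?_
    · have h1 : y < m₀ := Finset.mem_Iio.mp hy
      have h2 := m₀.isLt
      have h3 := Fin.lt_def.mp h1
      omega
    · intro x hx
      simp only [Finset.mem_filter, Finset.mem_univ, true_and] at hx
      simpa [Finset.mem_Iio] using hx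
    · intro y hy
      simpa using Finset.mem_Iio.mp hy
    · intro x hx
      ext
      simp [Fin.castSucc, Fin.castAdd, Fin.castLE]
    · intro y hy
      ext
      simp [Fin.castSucc, Fin.castAdd, Fin.castLE]
  rw [this, Fin.card_Iio]

/-! ### Decomposition of permutations -/

def consPerm {s : ℕ} (m₀ : Fin (s + 1)) (π : Equiv.Perm (Fin s)) : Equiv.Perm (Fin (s + 1)) :=
  (finSuccEquiv s).trans ((π.optionCongr).trans (finSuccEquiv' m₀).symm)

lemma consPerm_zero {s : ℕ} (m₀ : Fin (s + 1)) (π : Equiv.Perm (Fin s)) :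
    consPerm m₀ π 0 = m₀ := by
  simp [consPerm]

lemma consPerm_succ {s : ℕ} (m₀ : Fin (s + 1)) (π : Equiv.Perm (Fin s)) (m : Fin s) :
    consPerm m₀ π m.succ = m₀.succAbove (π m) := by
  simp [consPerm, finSuccEquiv_succ, finSuccEquiv'_symm_some]

lemma consPerm_bijective {s : ℕ} :
    Function.Bijective (fun p : Fin (s + 1) × Equiv.Perm (Fin s) => consPerm p.1 p.2) := by
  rw [Fintype.bijective_iff_injective_and_card]
  constructor
  · rintro ⟨m1, π1⟩ ⟨m2, π2⟩ hEq
    simp only at hEq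
    have h0 : m1 = m2 := by
      have := congrArg (fun e : Equiv.Perm (Fin (s + 1)) => e 0) hEq
      simpa [consPerm_zero] using this
    subst h0
    have hπ : π1 = π2 := by
      ext m
      have := congrArg (fun e : Equiv.Perm (Fin (s + 1)) => e m.succ) hEq
      simp only [consPerm_succ] at this
      exact congrArg Fin.val (Fin.succAbove_right_inj.mp this)
    rw [hπ]
  · simp [Fintype.card_perm, Nat.factorial_succ]

lemma permLen_consPerm {s : ℕ} (m₀ : Fin (s + 1)) (π : Equiv.Perm (Fin s)) :
    permLen (consPerm m₀ π) = m₀.val + permLen π := by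
  classical
  have hsplit :
      (((univ : Finset (Fin (s + 1) × Fin (s + 1))).filter
          (fun p => p.1 < p.2 ∧ consPerm m₀ π p.2 < consPerm m₀ π p.1)).filter
            (fun p => p.1 = 0)).card
      + (((univ : Finset (Fin (s + 1) × Fin (s + 1))).filter
          (fun p => p.1 < p.2 ∧ consPerm m₀ π p.2 < consPerm m₀ π p.1)).filter
            (fun p => ¬ p.1 = 0)).card
      = permLen (consPerm m₀ π) :=
    Finset.card_filter_add_card_filter_not _
  have cardA : (((univ : Finset (Fin (s + 1) × Fin (s + 1))).filter
      (fun p => p.1 < p.2 ∧ consPerm m₀ π p.2 < consPerm m₀ π p.1)).filter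
        (fun p => p.1 = 0)).card = m₀.val := by
    have hbij : ((univ : Finset (Fin s)).filter (fun x => Fin.castSucc x < m₀)).card
        = (((univ : Finset (Fin (s + 1) × Fin (s + 1))).filter
            (fun p => p.1 < p.2 ∧ consPerm m₀ π p.2 < consPerm m₀ π p.1)).filter
              (fun p => p.1 = 0)).card := by
      refine Finset.card_bij (fun x _ => ((0 : Fin (s + 1)), (π.symm x).succ)) ?_ ?_ ?_
      · intro x hx
        simp only [Finset.mem_filter, Finset.mem_univ, true_and] at hx ⊢
        refine ⟨⟨Fin.succ_pos _, ?_⟩, trivial⟩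
        rw [consPerm_succ, consPerm_zero, Equiv.apply_symm_apply]
        exact (Fin.succAbove_lt_iff_castSucc_lt m₀ x).mpr hx
      · intro x1 _ x2 _ hEq
        have := (Prod.mk.injEq _ _ _ _).mp hEq
        have h2 := Fin.succ_injective _ this.2
        exact π.symm.injective h2
      · intro p hp
        simp only [Finset.mem_filter, Finset.mem_univ, true_and] at hp
        obtain ⟨⟨h12, hlt⟩, h0⟩ := hp
        have hne : p.2 ≠ 0 := by rw [← h0]; exact h12.ne'
        obtain ⟨y, hy⟩ := Fin.eq_succ_of_ne_zero hne
        refine ⟨π y, ?_, ?_⟩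
        · simp only [Finset.mem_filter, Finset.mem_univ, true_and]
          rw [hy, h0, consPerm_succ, consPerm_zero] at hlt
          exact (Fin.succAbove_lt_iff_castSucc_lt m₀ (π y)).mp hlt
        · show ((0 : Fin (s + 1)), (π.symm (π y)).succ) = p
          rw [Equiv.symm_apply_apply]
          exact Prod.ext h0.symm hy.symm
    rw [← hbij, card_filter_castSucc_lt]
  have cardB : (((univ : Finset (Fin (s + 1) × Fin (s + 1))).filter
      (fun p => p.1 < p.2 ∧ consPerm m₀ π p.2 < consPerm m₀ π p.1)).filter
        (fun p => ¬ p.1 = 0)).card = permLen π := by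
    have hbij : ((univ : Finset (Fin s × Fin s)).filter
          (fun r => r.1 < r.2 ∧ π r.2 < π r.1)).card
        = (((univ : Finset (Fin (s + 1) × Fin (s + 1))).filter
            (fun p => p.1 < p.2 ∧ consPerm m₀ π p.2 < consPerm m₀ π p.1)).filter
              (fun p => ¬ p.1 = 0)).card := by
      refine Finset.card_bij (fun r _ => (r.1.succ, r.2.succ)) ?_ ?_ ?_
      · intro r hr
        simp only [Finset.mem_filter, Finset.mem_univ, true_and] at hr ⊢
        refine ⟨⟨Fin.succ_lt_succ_iff.mpr hr.1, ?_⟩, Fin.succ_ne_zero _⟩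
        rw [consPerm_succ, consPerm_succ]
        exact Fin.succAbove_lt_succAbove_iff.mpr hr.2
      · intro r1 _ r2 _ hEq
        have := (Prod.mk.injEq _ _ _ _).mp hEq
        exact Prod.ext (Fin.succ_injective _ this.1) (Fin.succ_injective _ this.2)
      · intro p hp
        simp only [Finset.mem_filter, Finset.mem_univ, true_and] at hp
        obtain ⟨⟨h12, hlt⟩, h0⟩ := hp
        have hne2 : p.2 ≠ 0 := by
          have : (0 : Fin (s + 1)) < p.1 := Fin.pos_of_ne_zero h0
          exact (this.trans h12).ne'
        obtain ⟨y1, hy1⟩ := Fin.eq_succ_of_ne_zero h0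
        obtain ⟨y2, hy2⟩ := Fin.eq_succ_of_ne_zero hne2
        refine ⟨(y1, y2), ?_, ?_⟩
        · simp only [Finset.mem_filter, Finset.mem_univ, true_and]
          rw [hy1, hy2] at h12 hlt
          rw [consPerm_succ, consPerm_succ] at hlt
          exact ⟨Fin.succ_lt_succ_iff.mp h12, Fin.succAbove_lt_succAbove_iff.mp hlt⟩
        · exact Prod.ext hy1.symm hy2.symm
    rw [← hbij]; rfl
  rw [← hsplit, cardA, cardB]

/-! ### The evaluation lemma -/

lemma image_succAbove_erase {s : ℕ} (τ : Fin (s + 1) → Fin N) (hτ : StrictMono τ)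
    (m₀ : Fin (s + 1)) :
    (univ.image τ).erase (τ m₀) = univ.image (τ ∘ m₀.succAbove) := by
  ext x
  simp only [Finset.mem_erase, Finset.mem_image, Finset.mem_univ, true_and, Function.comp]
  constructor
  · rintro ⟨hne, m, rfl⟩
    have hm : m ≠ m₀ := fun h => hne (by rw [h])
    obtain ⟨t, ht⟩ := Fin.exists_succAbove_eq hm
    exact ⟨t, by rw [ht]⟩
  · rintro ⟨t, rfl⟩
    refine ⟨fun h => ?_, m₀.succAbove t, rfl⟩
    exact Fin.succAbove_ne m₀ t (hτ.injective h)

lemma appL_eval : ∀ (s : ℕ) (ts τ : Fin s → Fin N), StrictMono τ →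
    appL (List.ofFn ts) (emp (q := q)) (univ.image τ) =
      ∑ π : Equiv.Perm (Fin s), ((-(q : k)) ^ permLen π) •
        (List.ofFn fun m => X k q N (ts m) (τ (π m))).prod := by
  intro s
  induction s with
  | zero =>
    intro ts τ hτ
    have h2 : ∀ π : Equiv.Perm (Fin 0), π = 1 := fun π => Equiv.ext fun x => x.elim0
    have h3 : (univ : Finset (Equiv.Perm (Fin 0))) = {1} :=
      Finset.eq_singleton_iff_unique_mem.mpr ⟨Finset.mem_univ 1, fun π _ => h2 π⟩
    rw [h3, Finset.sum_singleton]
    have h4 : permLen (1 : Equiv.Perm (Fin 0)) = 0 := by simp [permLen]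
    rw [h4]
    simp [appL, emp]
  | succ s ih =>
    intro ts τ hτ
    have hinj : ∀ x ∈ (univ : Finset (Fin (s + 1))), ∀ y ∈ univ, τ x = τ y → x = y :=
      fun x _ y _ h => hτ.injective h
    calc appL (List.ofFn ts) (emp (q := q)) (univ.image τ)
        = ∑ m₀ : Fin (s + 1),
            ((-(q : k)) ^ (((univ.image τ).filter (· < τ m₀)).card)) •
              (X k q N (ts 0) (τ m₀) *
                appL (List.ofFn fun i => ts i.succ) (emp (q := q))
                  ((univ.image τ).erase (τ m₀))) := by
          rw [List.ofFn_succ]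
          exact Finset.sum_image hinj
      _ = ∑ m₀ : Fin (s + 1), ((-(q : k)) ^ m₀.val) •
            (X k q N (ts 0) (τ m₀) *
              ∑ π' : Equiv.Perm (Fin s), ((-(q : k)) ^ permLen π') •
                (List.ofFn fun m =>
                  X k q N (ts m.succ) (τ (m₀.succAbove (π' m)))).prod) := by
          refine Finset.sum_congr rfl fun m₀ _ => ?_
          have hc : ((univ.image τ).filter (· < τ m₀)).card = m₀.val := by
            rw [Finset.filter_image, Finset.card_image_of_injective _ hτ.injective,
              show ((univ : Finset (Fin (s + 1))).filter fun a => τ a < τ m₀)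
                  = univ.filter (· < m₀) from
                Finset.filter_congr fun x _ => by simp [hτ.lt_iff_lt],
              card_filter_lt]
          rw [hc, image_succAbove_erase τ hτ m₀, ih (fun i => ts i.succ)
            (τ ∘ m₀.succAbove) (hτ.comp (Fin.strictMono_succAbove m₀))]
          rfl
      _ = ∑ m₀ : Fin (s + 1), ∑ π' : Equiv.Perm (Fin s),
            ((-(q : k)) ^ (m₀.val + permLen π')) •
              (X k q N (ts 0) (τ m₀) *
                (List.ofFn fun m =>
                  X k q N (ts m.succ) (τ (m₀.succAbove (π' m)))).prod) := by
          refine Finset.sum_congr rfl fun m₀ _ => ?_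
          rw [Finset.mul_sum, Finset.smul_sum]
          refine Finset.sum_congr rfl fun π' _ => ?_
          rw [mul_smul_comm, smul_smul, ← pow_add]
      _ = ∑ π : Equiv.Perm (Fin (s + 1)), ((-(q : k)) ^ permLen π) •
            (List.ofFn fun m => X k q N (ts m) (τ (π m))).prod := by
          rw [← Finset.sum_product', Finset.univ_product_univ]
          refine Fintype.sum_bijective _ consPerm_bijective _ _ fun p => ?_
          obtain ⟨m₀, π'⟩ := p
          rw [permLen_consPerm]
          congr 1
          simp only [List.ofFn_succ, List.prod_cons, consPerm_zero, consPerm_succ]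

end QLap

/-- The quantum Laplace relations in `O_q(M_n(k))`: for all `i, l`,
`∑_j (−q)^{j−l} X_{ij} [l̃|j̃] = δ_{il} D_q`. -/
theorem quantum_laplace (k : Type) [Field k] (q : kˣ) (n : ℕ) (i l : Fin (n + 1)) :
    ∑ j : Fin (n + 1),
        ((((-q) ^ ((j : ℤ) - (l : ℤ)) : kˣ) : k) •
          (QMn.X k q (n + 1) i j * cminor k q n l j)) =
      if i = l then QMn.Dq k q (n + 1) else 0 := by
  classical
  have him : ∀ j : Fin (n + 1),
      (Finset.univ.erase j) = Finset.univ.image j.succAbove := by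
    intro j
    ext x
    simp only [Finset.mem_erase, Finset.mem_univ, and_true, Finset.mem_image, true_and]
    constructor
    · intro h
      obtain ⟨t, ht⟩ := Fin.exists_succAbove_eq h
      exact ⟨t, ht⟩
    · rintro ⟨t, rfl⟩
      exact Fin.succAbove_ne j t
  have hminor : ∀ j : Fin (n + 1),
      QLap.appL (List.ofFn l.succAbove) (QLap.emp (q := q)) (Finset.univ.erase j)
        = cminor k q n l j := by
    intro j
    rw [him j]
    exact QLap.appL_eval n l.succAbove j.succAbove (Fin.strictMono_succAbove j)
  have hzop : QLap.appL (i :: List.ofFn l.succAbove) (QLap.emp (q := q)) Finset.univ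
      = ∑ j : Fin (n + 1),
          ((-(q : k)) ^ (j : ℕ)) • (QMn.X k q (n + 1) i j * cminor k q n l j) := by
    simp only [QLap.appL, QLap.zop]
    refine Finset.sum_congr rfl fun a _ => ?_
    rw [QLap.card_filter_lt, hminor a]
  have hcoef : ∀ j : Fin (n + 1),
      (((-q) ^ ((j : ℤ) - (l : ℤ)) : kˣ) : k)
        = ((((-q) ^ (l : ℤ))⁻¹ : kˣ) : k) * (-(q : k)) ^ (j : ℕ) := by
    intro j
    rw [zpow_sub, mul_comm, Units.val_mul]
    congr 1
  have sorted_eq : ∀ xs ys : List (Fin (n + 1)), xs.Pairwise (· < ·) → ys.Pairwise (· < ·) →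
      (∀ a, a ∈ xs ↔ a ∈ ys) → xs = ys := by
    intro xs ys hxs hys hmem
    refine List.Perm.eq_of_pairwise (fun _ _ _ _ h1 h2 => absurd h2 (lt_asymm h1)) hxs hys ?_
    refine List.perm_of_nodup_nodup_toFinset_eq hxs.nodup hys.nodup ?_
    ext a
    simp only [List.mem_toFinset, hmem a]
  have hSof : (List.ofFn l.succAbove).Pairwise (· < ·) :=
    List.pairwise_ofFn.mpr fun ⦃_ _⦄ h => Fin.strictMono_succAbove l h
  have hmemOf : ∀ x, x ∈ List.ofFn l.succAbove ↔ x ≠ l := by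
    intro x
    rw [List.mem_ofFn]
    constructor
    · rintro ⟨t, rfl⟩
      exact Fin.succAbove_ne l t
    · intro h
      exact Fin.exists_succAbove_eq h
  have hFR : (List.finRange (n + 1)).Pairwise (· < ·) := by
    rw [← List.ofFn_id]
    exact List.pairwise_ofFn.mpr fun ⦃_ _⦄ h => h
  calc ∑ j : Fin (n + 1),
        ((((-q) ^ ((j : ℤ) - (l : ℤ)) : kˣ) : k) •
          (QMn.X k q (n + 1) i j * cminor k q n l j))
      = ((((-q) ^ (l : ℤ))⁻¹ : kˣ) : k) •
          ∑ j : Fin (n + 1),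
            ((-(q : k)) ^ (j : ℕ)) • (QMn.X k q (n + 1) i j * cminor k q n l j) := by
        rw [Finset.smul_sum]
        exact Finset.sum_congr rfl fun j _ => by rw [hcoef j, mul_smul]
    _ = ((((-q) ^ (l : ℤ))⁻¹ : kˣ) : k) •
          QLap.appL (i :: List.ofFn l.succAbove) (QLap.emp (q := q)) Finset.univ := by
        rw [hzop]
    _ = if i = l then QMn.Dq k q (n + 1) else 0 := by
        by_cases hil : i = l
        · subst hil
          rw [if_pos rfl]
          set LA := (List.finRange (n + 1)).filter (fun t => decide (t < i)) with hLA
          set LB := (List.finRange (n + 1)).filter (fun t => decide (i < t)) with hLB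
          have hsLA : LA.Pairwise (· < ·) := List.Pairwise.filter _ hFR
          have hsLB : LB.Pairwise (· < ·) := List.Pairwise.filter _ hFR
          have hmLA : ∀ x, x ∈ LA ↔ x < i := by
            intro x
            simp [hLA, List.mem_filter, List.mem_finRange]
          have hmLB : ∀ x, x ∈ LB ↔ i < x := by
            intro x
            simp [hLB, List.mem_filter, List.mem_finRange]
          have F1 : List.ofFn i.succAbove = LA ++ LB := by
            refine sorted_eq _ _ hSof ?_ ?_
            · exact List.pairwise_append.mpr ⟨hsLA, hsLB,
                fun a ha b hb => lt_trans ((hmLA a).mp ha) ((hmLB b).mp hb)⟩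
            · intro a
              rw [hmemOf a, List.mem_append, hmLA a, hmLB a]
              exact ne_iff_lt_or_gt
          have F2 : LA ++ i :: LB = List.finRange (n + 1) := by
            refine sorted_eq _ _ ?_ hFR ?_
            · refine List.pairwise_append.mpr ⟨hsLA,
                List.pairwise_cons.mpr ⟨fun b hb => (hmLB b).mp hb, hsLB⟩, ?_⟩
              intro a ha b hb
              rcases List.mem_cons.mp hb with rfl | hb
              · exact (hmLA a).mp ha
              · exact lt_trans ((hmLA a).mp ha) ((hmLB b).mp hb)
            · intro a
              simp only [List.mem_append, List.mem_cons, List.mem_finRange, iff_true,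
                hmLA a, hmLB a]
              rcases lt_trichotomy a i with h | h | h
              · exact Or.inl h
              · exact Or.inr (Or.inl h)
              · exact Or.inr (Or.inr h)
          have F3 : LA.length = (i : ℕ) := by
            have hnd : LA.Nodup := (List.nodup_finRange (n + 1)).filter _
            have h1 : LA.toFinset = Finset.univ.filter (· < i) := by
              ext x
              simp [hLA, List.mem_filter, List.mem_finRange]
            rw [← List.toFinset_card_of_nodup hnd, h1, QLap.card_filter_lt]
          have hmove : QLap.appL (i :: List.ofFn i.succAbove) (QLap.emp (q := q))
              = ((-(q : k)) ^ (i : ℕ)) •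
                  QLap.appL (List.finRange (n + 1)) (QLap.emp (q := q)) := by
            calc QLap.appL (i :: List.ofFn i.succAbove) (QLap.emp (q := q))
                = QLap.appL (i :: LA) (QLap.appL LB (QLap.emp (q := q))) := by
                  rw [F1, show i :: (LA ++ LB) = (i :: LA) ++ LB from rfl, QLap.appL_append]
              _ = ((-(q : k)) ^ LA.length) •
                    QLap.appL (LA ++ [i]) (QLap.appL LB (QLap.emp (q := q))) :=
                  QLap.appL_move LA i (fun t ht => (hmLA t).mp ht) _
              _ = ((-(q : k)) ^ (i : ℕ)) •
                    QLap.appL (List.finRange (n + 1)) (QLap.emp (q := q)) := by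
                  rw [F3, ← QLap.appL_append,
                    show (LA ++ [i]) ++ LB = LA ++ i :: LB by simp, F2]
          have hDq : QLap.appL (List.finRange (n + 1)) (QLap.emp (q := q)) Finset.univ
              = QMn.Dq k q (n + 1) := by
            have h := QLap.appL_eval (k := k) (q := q) (N := n + 1) (n + 1) id id strictMono_id
            rw [List.ofFn_id, Finset.image_id] at h
            rw [h]
            rfl
          rw [hmove, Pi.smul_apply, hDq, smul_smul]
          have hone : ((((-q) ^ ((i : Fin (n + 1)) : ℤ))⁻¹ : kˣ) : k) * (-(q : k)) ^ (i : ℕ)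
              = 1 := by
            rw [show (-(q : k)) ^ (i : ℕ) = (((-q) ^ ((i : Fin (n + 1)) : ℤ) : kˣ) : k) from by
              rw [show (((i : Fin (n + 1)) : ℤ)) = (((i : ℕ) : ℕ) : ℤ) from rfl, zpow_natCast]
              push_cast
              ring, ← Units.val_mul, inv_mul_cancel, Units.val_one]
          rw [hone, one_smul]
        · rw [if_neg hil]
          set LA := (List.finRange (n + 1)).filter (fun t => decide (t < i ∧ t ≠ l)) with hLA
          set LB := (List.finRange (n + 1)).filter (fun t => decide (i < t ∧ t ≠ l)) with hLB
          have hsLA : LA.Pairwise (· < ·) := List.Pairwise.filter _ hFR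
          have hsLB : LB.Pairwise (· < ·) := List.Pairwise.filter _ hFR
          have hmLA : ∀ x, x ∈ LA ↔ x < i ∧ x ≠ l := by
            intro x
            simp [hLA, List.mem_filter, List.mem_finRange]
          have hmLB : ∀ x, x ∈ LB ↔ i < x ∧ x ≠ l := by
            intro x
            simp [hLB, List.mem_filter, List.mem_finRange]
          have F4 : List.ofFn l.succAbove = LA ++ i :: LB := by
            refine sorted_eq _ _ hSof ?_ ?_
            · refine List.pairwise_append.mpr ⟨hsLA,
                List.pairwise_cons.mpr ⟨fun b hb => ((hmLB b).mp hb).1, hsLB⟩, ?_⟩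
              intro a ha b hb
              rcases List.mem_cons.mp hb with rfl | hb
              · exact ((hmLA a).mp ha).1
              · exact lt_trans ((hmLA a).mp ha).1 ((hmLB b).mp hb).1
            · intro a
              rw [hmemOf a, List.mem_append, List.mem_cons, hmLA a, hmLB a]
              constructor
              · intro h
                rcases lt_trichotomy a i with hh | hh | hh
                · exact Or.inl ⟨hh, h⟩
                · exact Or.inr (Or.inl hh)
                · exact Or.inr (Or.inr ⟨hh, h⟩)
              · rintro (⟨_, h⟩ | rfl | ⟨_, h⟩)
                · exact h
                · exact hil
                · exact h
          have hzero : QLap.appL (i :: List.ofFn l.succAbove) (QLap.emp (q := q)) = 0 := by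
            rw [F4]
            exact QLap.appL_dup LA LB i (fun t ht => ((hmLA t).mp ht).1) _
          rw [hzero, Pi.zero_apply, smul_zero]
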